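/- Let f : ℤ_p → ℤ_p be continuous and R : ℤ_p → ℤ_p a contraction with f ∘ R = id. Fix 0 < δ < Lip(R)⁻¹ − 1 and φ with Lip(φ) ≤ δ and ‖φ‖_∞ ≤ δ, and set g := f + φ. Then there exists a map R̃ : ℤ_p → ℤ_p such that g ∘ R̃ = id, R̃(ℤ_p) = R(ℤ_p), and Lip(R̃) ≤ Lip(R)/(1 − δ·Lip(R)) < 1. -/

import Mathlib

open NNReal


theorem right_inverse_of_perturbation (p : ℕ) [Fact p.Prime]
    (f R φ : ℤ_[p] → ℤ_[p]) (hf : Continuous f)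
    (c : ℝ) (hc0 : 0 < c) (hc1 : c < 1)
    (hRlip : ∀ x y : ℤ_[p], ‖R x - R y‖ ≤ c * ‖x - y‖)
    (hfR : ∀ x : ℤ_[p], f (R x) = x)
    (δ : ℝ) (hδ0 : 0 < δ) (hδ : δ < c⁻¹ - 1)
    (hφlip : ∀ x y : ℤ_[p], ‖φ x - φ y‖ ≤ δ * ‖x - y‖)
    (hφbd : ∀ x : ℤ_[p], ‖φ x‖ ≤ δ) :
    ∃ R' : ℤ_[p] → ℤ_[p],
      (∀ x : ℤ_[p], f (R' x) + φ (R' x) = x) ∧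
      Set.range R' = Set.range R ∧
      (∀ x y : ℤ_[p], ‖R' x - R' y‖ ≤ (c / (1 - δ * c)) * ‖x - y‖) ∧
      c / (1 - δ * c) < 1 := by
  have hkey : δ * c < 1 - c := by
    have := mul_lt_mul_of_pos_right hδ hc0
    rwa [sub_mul, inv_mul_cancel₀ hc0.ne', one_mul] at this
  have hδc : δ * c < 1 := by linarith
  have hpos : (0:ℝ) < 1 - δ * c := by linarith
  set K : ℝ≥0 := ⟨c * δ, by positivity⟩ with hKdef
  have hK1 : (K : ℝ) < 1 := by show c * δ < 1; rw [mul_comm]; exact hδc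
  set T : ℤ_[p] → ℤ_[p] → ℤ_[p] := fun x y => R (x - φ y) with hT
  have hTc : ∀ x, ContractingWith K (T x) := by
    intro x
    refine ⟨by exact_mod_cast hK1, LipschitzWith.of_dist_le_mul fun a b => ?_⟩
    simp only [hT, dist_eq_norm]
    calc ‖R (x - φ a) - R (x - φ b)‖ ≤ c * ‖(x - φ a) - (x - φ b)‖ := hRlip _ _
      _ = c * ‖φ a - φ b‖ := by rw [show (x - φ a) - (x - φ b) = -(φ a - φ b) by ring,
            norm_neg]
      _ ≤ c * (δ * ‖a - b‖) := by
            exact mul_le_mul_of_nonneg_left (hφlip a b) hc0.le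
      _ = (K : ℝ) * ‖a - b‖ := by rw [show ((K:ℝ)) = c * δ from rfl]; ring
  set R' : ℤ_[p] → ℤ_[p] := fun x => ContractingWith.fixedPoint (T x) (hTc x) with hR'
  have hfix : ∀ x, R (x - φ (R' x)) = R' x := fun x =>
    ContractingWith.fixedPoint_isFixedPt (hTc x)
  have hginv : ∀ x, f (R' x) + φ (R' x) = x := by
    intro x
    have := hfix x
    calc f (R' x) + φ (R' x) = f (R (x - φ (R' x))) + φ (R' x) := by rw [this]
      _ = (x - φ (R' x)) + φ (R' x) := by rw [hfR]
      _ = x := by ring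
  refine ⟨R', hginv, ?_, ?_, ?_⟩
  · apply le_antisymm
    · rintro _ ⟨x, rfl⟩
      exact ⟨x - φ (R' x), hfix x⟩
    · rintro _ ⟨y, rfl⟩
      refine ⟨y + φ (R y), ?_⟩
      have : Function.IsFixedPt (T (y + φ (R y))) (R y) := by
        simp [hT, Function.IsFixedPt]
      have := ContractingWith.fixedPoint_unique' (hTc (y + φ (R y)))
        (ContractingWith.fixedPoint_isFixedPt (hTc (y + φ (R y)))) this
      simpa [hR'] using this
  · intro x y
    have h1 : ‖R' x - R' y‖ ≤ c * ‖x - y‖ + c * δ * ‖R' x - R' y‖ := by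
      calc ‖R' x - R' y‖ = ‖R (x - φ (R' x)) - R (y - φ (R' y))‖ := by
            rw [hfix x, hfix y]
        _ ≤ c * ‖(x - φ (R' x)) - (y - φ (R' y))‖ := hRlip _ _
        _ = c * ‖(x - y) + (φ (R' y) - φ (R' x))‖ := by ring_nf
        _ ≤ c * (‖x - y‖ + ‖φ (R' y) - φ (R' x)‖) :=
            mul_le_mul_of_nonneg_left (norm_add_le _ _) hc0.le
        _ ≤ c * (‖x - y‖ + δ * ‖R' y - R' x‖) := by
            have := hφlip (R' y) (R' x)
            nlinarith
        _ = c * ‖x - y‖ + c * δ * ‖R' x - R' y‖ := by rw [norm_sub_rev (R' y)]; ring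
    have h2 : (1 - δ * c) * ‖R' x - R' y‖ ≤ c * ‖x - y‖ := by nlinarith
    rw [div_mul_eq_mul_div, le_div_iff₀ hpos]
    nlinarith
  · rw [div_lt_one hpos]; linarith
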